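/- Let k ≥ 1, c ≥ 1, and ε ∈ ℝ, and let M := (1 − 2ε)·S + ε·(I + J) on the index type Fin c × Fin k. Then M · M₁ = ε · M₁, where M₁ := I − (1/k)·S. -/

import Mathlib

open Matrix Finset

/-- The all-ones matrix on `Fin c × Fin k`. -/
def Jmat (c k : ℕ) : Matrix (Fin c × Fin k) (Fin c × Fin k) ℝ :=
  Matrix.of fun _ _ => 1

/-- The block matrix `S = I_c ⊗ J_k`: `S ((a,p), (b,q)) = 1` iff `a = b`. -/
def Smat (c k : ℕ) : Matrix (Fin c × Fin k) (Fin c × Fin k) ℝ :=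
  Matrix.of fun p q => if p.1 = q.1 then 1 else 0

/-- The projection `M₁ = I − (1/k) S`. -/
noncomputable def M1 (c k : ℕ) : Matrix (Fin c × Fin k) (Fin c × Fin k) ℝ :=
  1 - ((k : ℝ))⁻¹ • Smat c k

/-- The projection `M₂ = (1/k) S − (1/(kc)) J`. -/
noncomputable def M2 (c k : ℕ) : Matrix (Fin c × Fin k) (Fin c × Fin k) ℝ :=
  ((k : ℝ))⁻¹ • Smat c k - ((k : ℝ) * (c : ℝ))⁻¹ • Jmat c k

/-- The projection `M₃ = (1/(kc)) J`. -/
noncomputable def M3 (c k : ℕ) : Matrix (Fin c × Fin k) (Fin c × Fin k) ℝ :=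
  ((k : ℝ) * (c : ℝ))⁻¹ • Jmat c k

/-- The matrix `M = (1 − 2ε) S + ε (I + J)`. -/
noncomputable def Mmat (c k : ℕ) (ε : ℝ) : Matrix (Fin c × Fin k) (Fin c × Fin k) ℝ :=
  (1 - 2 * ε) • Smat c k + ε • ((1 : Matrix (Fin c × Fin k) (Fin c × Fin k) ℝ) + Jmat c k)

lemma SS_aux (c k : ℕ) : Smat c k * Smat c k = (k:ℝ) • Smat c k := by
  ext ⟨a,p⟩ ⟨e,r⟩
  simp only [Matrix.mul_apply, Fintype.sum_prod_type, Smat, of_apply, Matrix.smul_apply, smul_eq_mul]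
  simp [Finset.sum_ite_eq, ite_and, mul_ite]
  split_ifs <;> simp

lemma SJ_aux (c k : ℕ) : Smat c k * Jmat c k = (k:ℝ) • Jmat c k := by
  ext ⟨a,p⟩ ⟨e,r⟩
  simp only [Matrix.mul_apply, Fintype.sum_prod_type, Smat, Jmat, of_apply, Matrix.smul_apply,
    smul_eq_mul, mul_one, Finset.sum_ite_eq, Finset.mem_univ, if_true, Finset.sum_const,
    Finset.card_univ, Fintype.card_fin, nsmul_eq_mul, mul_one]
  simp [apply_ite Finset.card, Finset.sum_ite_eq]

lemma JS_aux (c k : ℕ) : Jmat c k * Smat c k = (k:ℝ) • Jmat c k := by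
  ext ⟨a,p⟩ ⟨e,r⟩
  simp only [Matrix.mul_apply, Fintype.sum_prod_type, Smat, Jmat, of_apply, Matrix.smul_apply,
    smul_eq_mul, one_mul, Finset.sum_const, Finset.card_univ, Fintype.card_fin, nsmul_eq_mul]
  simp [apply_ite Finset.card, Finset.sum_ite_eq']

/-- `M · M₁ = ε · M₁`. -/
theorem Mmat_mul_M1 {c k : ℕ} (hk : 1 ≤ k) (hc : 1 ≤ c) (ε : ℝ) :
    Mmat c k ε * M1 c k = ε • M1 c k := by
  have hk0 : (k:ℝ) ≠ 0 := Nat.cast_ne_zero.mpr (by omega)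
  unfold Mmat M1
  rw [mul_sub, mul_one, Matrix.mul_smul]
  simp only [add_mul, smul_mul_assoc, one_mul, SS_aux, SJ_aux, JS_aux, Matrix.one_mul]
  match_scalars <;> field_simp <;> ring_nf
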